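/- A collection of tubes T is a complete tubing of a graph G if and only if T is the disjoint union of {G} and a complete tubing of G∖e for a unique edge e of G, assuming G is connected with at least one edge. Here e is the unique edge of G lying outside every proper tube of T. -/

import Mathlib

open SimpleGraph

namespace Cosmo

variable {V : Type*}

/-- A tube of `G` is a connected subgraph. -/
def IsTube (G : SimpleGraph V) (T : G.Subgraph) : Prop := T.Connected

/-- Tubes are nested if one contains the other. -/
def Nested {G : SimpleGraph V} (S T : G.Subgraph) : Prop := S ≤ T ∨ T ≤ S

/-- Tubes overlap if their (vertex) intersection is nonempty and they are not nested. -/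
def Overlapping {G : SimpleGraph V} (S T : G.Subgraph) : Prop :=
  (S.verts ∩ T.verts).Nonempty ∧ ¬ Nested S T

/-- Tubes are incompatible if there is an edge of `G` between them and they are not nested. -/
def Incompatible {G : SimpleGraph V} (S T : G.Subgraph) : Prop :=
  (∃ u w, G.Adj u w ∧ u ∈ S.verts ∧ w ∈ T.verts) ∧ ¬ Nested S T

/-- Tubes are compatible if they are not incompatible. -/
def Compatible {G : SimpleGraph V} (S T : G.Subgraph) : Prop := ¬ Incompatible S T

/-- A complete tubing: a maximal collection of pairwise non-overlapping tubes. -/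
def IsCompleteTubing (G : SimpleGraph V) (𝒯 : Set G.Subgraph) : Prop :=
  Maximal (fun 𝒞 : Set G.Subgraph =>
    (∀ T ∈ 𝒞, IsTube G T) ∧ 𝒞.Pairwise fun S T => ¬ Overlapping S T) 𝒯

/-- An admissible tubing: a maximal collection of pairwise compatible induced tubes. -/
def IsAdmissibleTubing (G : SimpleGraph V) (𝒯 : Set G.Subgraph) : Prop :=
  Maximal (fun 𝒞 : Set G.Subgraph =>
    (∀ T ∈ 𝒞, IsTube G T ∧ T.IsInduced) ∧ 𝒞.Pairwise Compatible) 𝒯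

/-- A labeling of an admissible tubing by the vertices, as in the bijection lemma:
`g v` is the tube associated to `v`, i.e. `v ∈ g v` and `v` avoids all strictly
smaller tubes of the tubing. -/
def IsVertexLabeling (G : SimpleGraph V) (𝒯 : Set G.Subgraph) (g : V → G.Subgraph) : Prop :=
  Set.BijOn g Set.univ 𝒯 ∧ ∀ v, v ∈ (g v).verts ∧ ∀ S ∈ 𝒯, S < g v → v ∉ S.verts


section Aux

variable {G : SimpleGraph V}

lemma nested_symm {S T : G.Subgraph} (h : Nested S T) : Nested T S := h.symm

lemma not_overlapping_symm {S T : G.Subgraph} (h : ¬ Overlapping S T) : ¬ Overlapping T S := by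
  intro ⟨hn, hne⟩
  exact h ⟨by rwa [Set.inter_comm], fun hh => hne hh.symm⟩

/-- If a tube is nested-or-disjoint with every member of a complete tubing, it belongs to it. -/
lemma mem_of_compat {𝒯 : Set G.Subgraph} (h𝒯 : IsCompleteTubing G 𝒯) {X : G.Subgraph}
    (hX : IsTube G X) (h : ∀ T ∈ 𝒯, ¬ Overlapping X T) : X ∈ 𝒯 := by
  have hsub : 𝒯 ⊆ insert X 𝒯 := Set.subset_insert _ _
  have hP : (∀ T ∈ insert X 𝒯, IsTube G T) ∧
      (insert X 𝒯).Pairwise fun S T => ¬ Overlapping S T := by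
    constructor
    · rintro T (rfl | hT)
      · exact hX
      · exact h𝒯.1.1 T hT
    · intro S hS T hT hST
      rcases hS with rfl | hS
      · rcases hT with rfl | hT
        · exact absurd rfl hST
        · exact h T hT
      · rcases hT with rfl | hT
        · exact not_overlapping_symm (h S hS)
        · exact h𝒯.1.2 hS hT hST
  exact (h𝒯.2 hP hsub) (Set.mem_insert _ _)

lemma nested_of_mem {𝒯 : Set G.Subgraph} (h𝒯 : IsCompleteTubing G 𝒯) {S T : G.Subgraph}
    (hS : S ∈ 𝒯) (hT : T ∈ 𝒯) (hn : (S.verts ∩ T.verts).Nonempty) : Nested S T := by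
  by_cases hST : S = T
  · exact Or.inl hST.le
  · by_contra hne
    exact h𝒯.1.2 hS hT hST ⟨hn, hne⟩

lemma top_tube (hconn : G.Connected) : IsTube G (⊤ : G.Subgraph) := by
  rw [IsTube, Subgraph.connected_iff']
  exact (Subgraph.topIso (G := G)).connected_iff.mpr hconn

lemma top_mem {𝒯 : Set G.Subgraph} (h𝒯 : IsCompleteTubing G 𝒯) (hconn : G.Connected) :
    (⊤ : G.Subgraph) ∈ 𝒯 :=
  mem_of_compat h𝒯 (top_tube hconn) fun T _ => fun hov => hov.2 (Or.inr le_top)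

lemma singleton_mem {𝒯 : Set G.Subgraph} (h𝒯 : IsCompleteTubing G 𝒯) (v : V) :
    G.singletonSubgraph v ∈ 𝒯 := by
  refine mem_of_compat h𝒯 Subgraph.singletonSubgraph_connected fun T _ hov => ?_
  rcases hov with ⟨⟨z, hz1, hz2⟩, hne⟩
  rw [singletonSubgraph_verts, Set.mem_singleton_iff] at hz1
  subst hz1
  exact hne (Or.inl ((G.singletonSubgraph_le_iff z T).mpr hz2))

end Aux

section Del

variable {G : SimpleGraph V} {e : Sym2 V}

/-- The canonical map from subgraphs of `G∖e` to subgraphs of `G`. -/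
private abbrev phi (G : SimpleGraph V) (e : Sym2 V) :
    (G.deleteEdges {e}).Subgraph → G.Subgraph :=
  Subgraph.map (Hom.ofLE (G.deleteEdges_le {e}))

@[simp] lemma phi_verts (T : (G.deleteEdges {e}).Subgraph) : (phi G e T).verts = T.verts := by
  simp [Subgraph.map, Hom.coe_ofLE]

@[simp] lemma phi_adj (T : (G.deleteEdges {e}).Subgraph) (a b : V) :
    (phi G e T).Adj a b ↔ T.Adj a b := by
  constructor
  · rintro ⟨u, v, h, hu, hv⟩
    simp only [Hom.coe_ofLE, id] at hu hv
    subst hu; subst hv; exact h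
  · intro h; exact ⟨a, b, h, rfl, rfl⟩

lemma phi_inj : Function.Injective (phi G e) := by
  intro S T h
  ext x y
  · constructor <;> intro hx
    · have := (phi_verts S) ▸ (phi_verts T) ▸ congrArg Subgraph.verts h
      exact this ▸ hx
    · have := (phi_verts S) ▸ (phi_verts T) ▸ congrArg Subgraph.verts h
      exact this.symm ▸ hx
  · rw [← phi_adj S, ← phi_adj T, h]

lemma phi_le_iff {S T : (G.deleteEdges {e}).Subgraph} : phi G e S ≤ phi G e T ↔ S ≤ T := by
  constructor
  · rintro ⟨h1, h2⟩
    refine ⟨?_, fun {a b} hab => (phi_adj T a b).mp (h2 ((phi_adj S a b).mpr hab))⟩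
    rw [phi_verts, phi_verts] at h1; exact h1
  · rintro ⟨h1, h2⟩
    refine ⟨?_, fun {a b} hab => (phi_adj T a b).mpr (h2 ((phi_adj S a b).mp hab))⟩
    rw [phi_verts, phi_verts]; exact h1

lemma phi_nested_iff {S T : (G.deleteEdges {e}).Subgraph} :
    Nested (phi G e S) (phi G e T) ↔ Nested S T := by
  unfold Nested; rw [phi_le_iff, phi_le_iff]

lemma phi_overlapping_iff {S T : (G.deleteEdges {e}).Subgraph} :
    Overlapping (phi G e S) (phi G e T) ↔ Overlapping S T := by
  unfold Overlapping; rw [phi_verts, phi_verts, phi_nested_iff]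

/-- Transfer connectivity between subgraphs of different ambient graphs that have the same
vertices and adjacency. -/
lemma connected_congr {G' : SimpleGraph V} {S : G.Subgraph} {S' : G'.Subgraph}
    (hv : S.verts = S'.verts) (ha : ∀ a b, S.Adj a b ↔ S'.Adj a b) :
    S.Connected ↔ S'.Connected := by
  rw [Subgraph.connected_iff', Subgraph.connected_iff']
  refine (Iso.connected_iff ?_)
  exact
    { toEquiv := Equiv.setCongr hv
      map_rel_iff' := by
        rintro ⟨a, haa⟩ ⟨b, hbb⟩
        simp only [Equiv.setCongr, Equiv.coe_fn_mk, Subgraph.coe_adj]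
        exact (ha a b).symm }

lemma phi_connected_iff {T : (G.deleteEdges {e}).Subgraph} :
    (phi G e T).Connected ↔ T.Connected :=
  connected_congr (phi_verts T) (phi_adj T)

lemma phi_edgeSet (T : (G.deleteEdges {e}).Subgraph) : (phi G e T).edgeSet = T.edgeSet := by
  ext f
  induction f using Sym2.ind with
  | _ a b => rw [Subgraph.mem_edgeSet, Subgraph.mem_edgeSet, phi_adj]

lemma phi_ne_top (he : e ∈ G.edgeSet) (T : (G.deleteEdges {e}).Subgraph) :
    phi G e T ≠ ⊤ := by
  intro h
  have h1 : e ∈ (phi G e T).edgeSet := by rw [h, Subgraph.edgeSet_top]; exact he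
  rw [phi_edgeSet] at h1
  have := T.edgeSet_subset h1
  rw [edgeSet_deleteEdges] at this
  exact this.2 rfl

/-- Inverse of `phi` on subgraphs avoiding `e`. -/
private def psi (G : SimpleGraph V) (e : Sym2 V) (S : G.Subgraph) (h : e ∉ S.edgeSet) :
    (G.deleteEdges {e}).Subgraph where
  verts := S.verts
  Adj := S.Adj
  adj_sub := fun {a b} hab => by
    rw [SimpleGraph.deleteEdges_adj]
    refine ⟨S.adj_sub hab, ?_⟩
    simp only [Set.mem_singleton_iff]
    rintro rfl
    exact h (Subgraph.mem_edgeSet.mpr hab)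
  edge_vert := fun hab => S.edge_vert hab
  symm := S.symm

@[simp] lemma phi_psi (S : G.Subgraph) (h : e ∉ S.edgeSet) : phi G e (psi G e S h) = S := by
  ext x y
  · rw [phi_verts]; exact Iff.rfl
  · rw [phi_adj]; exact Iff.rfl

end Del

section Comp

variable {H : SimpleGraph V}

/-- The connected component of `x` as a subgraph with all edges. -/
private def compSub (H : SimpleGraph V) (x : V) : H.Subgraph where
  verts := {z | H.Reachable x z}
  Adj a b := H.Adj a b ∧ H.Reachable x a ∧ H.Reachable x b
  adj_sub h := h.1
  edge_vert h := h.2.1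
  symm := ⟨fun a b h => ⟨h.1.symm, h.2.2, h.2.1⟩⟩

private lemma compSub_reach {x a b : V} (w : H.Walk a b) (ha : H.Reachable x a) :
    ∀ (hb : H.Reachable x b),
      (compSub H x).coe.Reachable ⟨a, ha⟩ ⟨b, hb⟩ := by
  induction w with
  | nil => intro hb; rfl
  | @cons u c d h p ih =>
    intro hb
    have hc : H.Reachable x c := ha.trans h.reachable
    have step : (compSub H x).coe.Adj ⟨u, ha⟩ ⟨c, hc⟩ := ⟨h, ha, hc⟩
    exact step.reachable.trans (ih hc hb)

private lemma compSub_connected (x : V) : (compSub H x).Connected := by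
  rw [Subgraph.connected_iff]
  constructor
  · constructor
    rintro ⟨a, ha⟩ ⟨b, hb⟩
    have ha' : H.Reachable x a := ha
    have hb' : H.Reachable x b := hb
    obtain ⟨w⟩ := ha'.symm.trans hb'
    exact compSub_reach w ha hb
  · exact ⟨x, Set.mem_setOf.mpr (Reachable.refl x)⟩

/-- Any connected subgraph meeting the component of `x` is contained in it. -/
private lemma le_compSub {x : V} {T : H.Subgraph} (hT : T.Connected)
    {z : V} (hz : z ∈ T.verts) (hxz : H.Reachable x z) : T ≤ compSub H x := by
  have hreach : ∀ a ∈ T.verts, H.Reachable x a := by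
    intro a ha
    have := hT.coe ⟨z, hz⟩ ⟨a, ha⟩
    exact hxz.trans (this.map (Subgraph.hom T))
  exact ⟨fun a ha => hreach a ha, fun {a b} hab =>
    ⟨T.adj_sub hab, hreach a (T.edge_vert hab), hreach b (T.edge_vert hab.symm)⟩⟩

end Comp

section DelReach

variable {G : SimpleGraph V}

/-- Deleting one edge leaves at most two pieces. -/
private lemma reach_del_aux {u w a z : V} (p : G.Walk a z)
    (ha : (G.deleteEdges {s(u,w)}).Reachable u a ∨ (G.deleteEdges {s(u,w)}).Reachable w a) :
    (G.deleteEdges {s(u,w)}).Reachable u z ∨ (G.deleteEdges {s(u,w)}).Reachable w z := by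
  induction p with
  | nil => exact ha
  | @cons a c d h p ih =>
    apply ih
    by_cases hec : s(a, c) = s(u, w)
    · rw [Sym2.eq_iff] at hec
      rcases hec with ⟨rfl, rfl⟩ | ⟨rfl, rfl⟩
      · exact Or.inr (Reachable.refl _)
      · exact Or.inl (Reachable.refl _)
    · have hadj : (G.deleteEdges {s(u,w)}).Adj a c := by
        rw [SimpleGraph.deleteEdges_adj]
        exact ⟨h, by simpa using hec⟩
      rcases ha with h1 | h1
      · exact Or.inl (h1.trans hadj.reachable)
      · exact Or.inr (h1.trans hadj.reachable)

private lemma reach_del {u w : V} (hconn : G.Connected) (z : V) :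
    (G.deleteEdges {s(u, w)}).Reachable u z ∨ (G.deleteEdges {s(u, w)}).Reachable w z := by
  obtain ⟨p⟩ := hconn.preconnected u z
  exact reach_del_aux p (Or.inl (Reachable.refl u))

end DelReach

section Exist

variable {G : SimpleGraph V}

private lemma sym2_rep (f : Sym2 V) : ∃ a b, f = s(a, b) := by
  induction f using Sym2.ind with
  | _ a b => exact ⟨a, b, rfl⟩

private lemma finite_subgraph [Fintype V] : Finite (G.Subgraph) :=
  Finite.of_injective (fun S => (S.verts, S.Adj))
    (fun S T h => Subgraph.ext (congrArg Prod.fst h) (congrArg Prod.snd h))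

/-- There is an edge of `G` lying in no proper tube of a complete tubing. -/
private lemma exists_uncovered [Fintype V] {𝒯 : Set G.Subgraph} (h𝒯 : IsCompleteTubing G 𝒯)
    (hconn : G.Connected) (hedge : G.edgeSet.Nonempty) :
    ∃ e ∈ G.edgeSet, ∀ T ∈ 𝒯, T ≠ ⊤ → e ∉ T.edgeSet := by
  haveI : Finite (G.Subgraph) := finite_subgraph
  classical
  obtain ⟨e₀, he₀⟩ := hedge
  obtain ⟨u₀, w₀, rfl⟩ := sym2_rep e₀
  have huw : u₀ ≠ w₀ := (G.mem_edgeSet.mp he₀).ne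
  set ℱ : Set G.Subgraph := {T | T ∈ 𝒯 ∧ T ≠ ⊤} with hℱ
  have hsing : G.singletonSubgraph u₀ ∈ ℱ := by
    refine ⟨singleton_mem h𝒯 u₀, ?_⟩
    intro h
    have : w₀ ∈ (G.singletonSubgraph u₀).verts := by
      rw [h]; trivial
    rw [singletonSubgraph_verts, Set.mem_singleton_iff] at this
    exact huw this.symm
  obtain ⟨M, -, hMmax⟩ := (Set.toFinite ℱ).exists_le_maximal hsing
  obtain ⟨⟨hM𝒯, hMne⟩, hMmax⟩ := hMmax
  -- key fact: any proper tube `S` meeting `M` is contained in `M`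
  have hkey : ∀ S ∈ 𝒯, S ≠ ⊤ → (S.verts ∩ M.verts).Nonempty → S ≤ M := by
    intro S hS hSne hmeet
    rcases nested_of_mem h𝒯 hS hM𝒯 hmeet with h | h
    · exact h
    · exact hMmax ⟨hS, hSne⟩ h
  by_cases hMv : M.verts = Set.univ
  · -- `M` is spanning; an edge missing from `M` exists and is uncovered
    have : ∃ f ∈ G.edgeSet, f ∉ M.edgeSet := by
      by_contra hall
      push_neg at hall
      apply hMne
      ext x y
      · simp [hMv]
      · constructor
        · exact fun h => M.adj_sub h
        · intro h
          exact Subgraph.mem_edgeSet.mp (hall _ (G.mem_edgeSet.mpr h))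
    obtain ⟨f, hf, hfM⟩ := this
    refine ⟨f, hf, fun S hS hSne hfS => ?_⟩
    obtain ⟨a, b, rfl⟩ := sym2_rep f
    have haS : a ∈ S.verts := S.edge_vert (Subgraph.mem_edgeSet.mp hfS)
    have hle : S ≤ M := hkey S hS hSne ⟨a, haS, by rw [hMv]; trivial⟩
    exact hfM (Subgraph.mem_edgeSet.mpr (hle.2 (Subgraph.mem_edgeSet.mp hfS)))
  · -- there is a boundary edge of `M`, and it is uncovered
    obtain ⟨y, hy⟩ : ∃ y, y ∉ M.verts := by
      by_contra hc
      push_neg at hc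
      exact hMv (Set.eq_univ_of_forall hc)
    obtain ⟨x, hx⟩ : M.verts.Nonempty := (h𝒯.1.1 M hM𝒯).nonempty
    obtain ⟨p⟩ := hconn.preconnected x y
    obtain ⟨d, -, hd1, hd2⟩ := p.exists_boundary_dart M.verts hx hy
    refine ⟨s(d.fst, d.snd), G.mem_edgeSet.mpr d.adj, fun S hS hSne hfS => ?_⟩
    have hadjS : S.Adj d.fst d.snd := Subgraph.mem_edgeSet.mp hfS
    have hle : S ≤ M := hkey S hS hSne ⟨d.fst, S.edge_vert hadjS, hd1⟩
    exact hd2 (hle.1 (S.edge_vert hadjS.symm))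

end Exist

section Main

variable {G : SimpleGraph V}

private lemma nested_of_pairwise {𝒟 : Set G.Subgraph}
    (h : 𝒟.Pairwise fun S T => ¬ Overlapping S T) {S T : G.Subgraph}
    (hS : S ∈ 𝒟) (hT : T ∈ 𝒟) (hm : (S.verts ∩ T.verts).Nonempty) : Nested S T := by
  by_cases hST : S = T
  · exact Or.inl hST.le
  · by_contra hne
    exact h hS hT hST ⟨hm, hne⟩

private lemma compSub_mem {H : SimpleGraph V} {𝒯' : Set H.Subgraph}
    (h : IsCompleteTubing H 𝒯') (x : V) : compSub H x ∈ 𝒯' := by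
  refine mem_of_compat h (compSub_connected x) fun T hT hov => ?_
  obtain ⟨⟨z, hz1, hz2⟩, hne⟩ := hov
  exact hne (Or.inr (le_compSub (h.1.1 T hT) hz2 hz1))

private lemma prop_insert (hconn : G.Connected) {e : Sym2 V}
    (𝒞' : Set (G.deleteEdges {e}).Subgraph)
    (h1 : ∀ T ∈ 𝒞', IsTube (G.deleteEdges {e}) T)
    (h2 : 𝒞'.Pairwise fun S T => ¬ Overlapping S T) :
    (∀ T ∈ insert ⊤ (phi G e '' 𝒞'), IsTube G T) ∧
      (insert ⊤ (phi G e '' 𝒞')).Pairwise fun S T => ¬ Overlapping S T := by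
  constructor
  · rintro T (rfl | ⟨T₀, hT₀, rfl⟩)
    · exact top_tube hconn
    · exact phi_connected_iff.mpr (h1 T₀ hT₀)
  · rintro S (rfl | ⟨S₀, hS₀, rfl⟩) T (rfl | ⟨T₀, hT₀, rfl⟩) hne hov
    · exact hne rfl
    · exact hov.2 (Or.inr le_top)
    · exact hov.2 (Or.inl le_top)
    · exact h2 hS₀ hT₀ (fun h => hne (congrArg (phi G e) h)) (phi_overlapping_iff.mp hov)

private lemma forward_data [Fintype V] {𝒯 : Set G.Subgraph} (h𝒯 : IsCompleteTubing G 𝒯)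
    (hconn : G.Connected) {e : Sym2 V} (he : e ∈ G.edgeSet)
    (hunc : ∀ T ∈ 𝒯, T ≠ ⊤ → e ∉ T.edgeSet) :
    ∃ 𝒯' : Set (G.deleteEdges {e}).Subgraph,
      IsCompleteTubing (G.deleteEdges {e}) 𝒯' ∧
      (⊤ : G.Subgraph) ∉ phi G e '' 𝒯' ∧
      𝒯 = insert ⊤ (phi G e '' 𝒯') := by
  classical
  set 𝒯' := phi G e ⁻¹' 𝒯 with h𝒯'def
  have heq : 𝒯 = insert ⊤ (phi G e '' 𝒯') := by
    apply Set.Subset.antisymm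
    · intro T hT
      by_cases hTtop : T = ⊤
      · exact hTtop ▸ Set.mem_insert _ _
      · have hTe : e ∉ T.edgeSet := hunc T hT hTtop
        refine Set.mem_insert_of_mem _ ⟨psi G e T hTe, ?_, phi_psi T hTe⟩
        rw [h𝒯'def, Set.mem_preimage, phi_psi]
        exact hT
    · rintro T (rfl | ⟨T₀, hT₀, rfl⟩)
      · exact top_mem h𝒯 hconn
      · exact hT₀
  refine ⟨𝒯', ⟨⟨?_, ?_⟩, ?_⟩, ?_, heq⟩
  · intro T₀ hT₀
    exact phi_connected_iff.mp (h𝒯.1.1 _ hT₀)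
  · intro S₀ hS₀ T₀ hT₀ hne hov
    exact h𝒯.1.2 hS₀ hT₀ (fun h => hne (phi_inj h)) (phi_overlapping_iff.mpr hov)
  · intro 𝒞' h𝒞' hsub U₀ hU₀
    have hprop := prop_insert hconn 𝒞' h𝒞'.1 h𝒞'.2
    have hsub2 : 𝒯 ⊆ insert ⊤ (phi G e '' 𝒞') := by
      rw [heq]; exact Set.insert_subset_insert (Set.image_mono hsub)
    have hh := h𝒯.2 hprop hsub2
    rw [h𝒯'def, Set.mem_preimage]
    exact hh (Set.mem_insert_of_mem _ ⟨U₀, hU₀, rfl⟩)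
  · rintro ⟨T₀, -, h⟩
    exact phi_ne_top he T₀ h

private lemma unique_uncovered {𝒯 : Set G.Subgraph} {e : Sym2 V}
    (he : e ∈ G.edgeSet) {𝒯' : Set (G.deleteEdges {e}).Subgraph}
    (h𝒯' : IsCompleteTubing (G.deleteEdges {e}) 𝒯')
    (heq : 𝒯 = insert ⊤ (phi G e '' 𝒯'))
    {e' : Sym2 V} (he' : e' ∈ G.edgeSet)
    (hunc' : ∀ T ∈ 𝒯, T ≠ ⊤ → e' ∉ T.edgeSet) : e' = e := by
  by_contra hne
  obtain ⟨a, b, rfl⟩ := sym2_rep e'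
  have hHadj : (G.deleteEdges {e}).Adj a b := by
    rw [SimpleGraph.deleteEdges_adj]
    exact ⟨G.mem_edgeSet.mp he', by simpa using hne⟩
  have hC := compSub_mem h𝒯' a
  refine hunc' (phi G e (compSub _ a))
    (heq ▸ Set.mem_insert_of_mem _ ⟨_, hC, rfl⟩) (phi_ne_top he _) ?_
  rw [phi_edgeSet]
  exact Subgraph.mem_edgeSet.mpr ⟨hHadj, Reachable.refl a, hHadj.reachable⟩

private lemma backward {𝒯 : Set G.Subgraph} (hconn : G.Connected) {e : Sym2 V}
    (he : e ∈ G.edgeSet) {𝒯' : Set (G.deleteEdges {e}).Subgraph}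
    (h𝒯' : IsCompleteTubing (G.deleteEdges {e}) 𝒯')
    (heq : 𝒯 = insert ⊤ (phi G e '' 𝒯')) :
    IsCompleteTubing G 𝒯 := by
  obtain ⟨u, w, rfl⟩ := sym2_rep e
  have hGuw : G.Adj u w := G.mem_edgeSet.mp he
  have hnHuw : ¬ (G.deleteEdges {s(u, w)}).Adj u w := by
    rw [SimpleGraph.deleteEdges_adj]
    rintro ⟨-, h⟩
    exact h rfl
  constructor
  · rw [heq]
    exact prop_insert hconn 𝒯' h𝒯'.1.1 h𝒯'.1.2
  · intro 𝒟 h𝒟 hsub U hU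
    by_cases hUtop : U = ⊤
    · rw [heq, hUtop]; exact Set.mem_insert _ _
    -- first: `e ∉ U.edgeSet`
    have hUe : s(u, w) ∉ U.edgeSet := by
      intro heU
      have hUadj : U.Adj u w := Subgraph.mem_edgeSet.mp heU
      apply hUtop
      set A := phi G (s(u, w)) (compSub (G.deleteEdges {s(u, w)}) u) with hA
      set B := phi G (s(u, w)) (compSub (G.deleteEdges {s(u, w)}) w) with hB
      have hA𝒟 : A ∈ 𝒟 :=
        hsub (heq ▸ Set.mem_insert_of_mem _ ⟨_, compSub_mem h𝒯' u, rfl⟩)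
      have hB𝒟 : B ∈ 𝒟 :=
        hsub (heq ▸ Set.mem_insert_of_mem _ ⟨_, compSub_mem h𝒯' w, rfl⟩)
      have hAverts : u ∈ A.verts := by
        rw [hA, phi_verts]; exact Reachable.refl u
      have hBverts : w ∈ B.verts := by
        rw [hB, phi_verts]; exact Reachable.refl w
      have hAU : A ≤ U := by
        rcases nested_of_pairwise h𝒟.2 hU hA𝒟 ⟨u, U.edge_vert hUadj, hAverts⟩ with h | h
        · exfalso
          exact hnHuw ((phi_adj _ u w).mp (h.2 hUadj)).1
        · exact h
      have hBU : B ≤ U := by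
        rcases nested_of_pairwise h𝒟.2 hU hB𝒟 ⟨w, U.edge_vert hUadj.symm, hBverts⟩ with h | h
        · exfalso
          exact hnHuw ((phi_adj _ u w).mp (h.2 hUadj)).1
        · exact h
      ext x y
      · simp only [Subgraph.verts_top, Set.mem_univ, iff_true]
        rcases reach_del (u := u) (w := w) hconn x with h | h
        · exact hAU.1 (by rw [hA, phi_verts]; exact h)
        · exact hBU.1 (by rw [hB, phi_verts]; exact h)
      · simp only [Subgraph.top_adj]
        constructor
        · exact fun h => U.adj_sub h
        · intro hxy
          by_cases hxye : s(x, y) = s(u, w)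
          · rw [Sym2.eq_iff] at hxye
            rcases hxye with ⟨rfl, rfl⟩ | ⟨rfl, rfl⟩
            · exact hUadj
            · exact hUadj.symm
          · have hH : (G.deleteEdges {s(u, w)}).Adj x y := by
              rw [SimpleGraph.deleteEdges_adj]
              exact ⟨hxy, by simpa using hxye⟩
            rcases reach_del (u := u) (w := w) hconn x with h | h
            · exact hAU.2 ((phi_adj _ x y).mpr ⟨hH, h, h.trans hH.reachable⟩)
            · exact hBU.2 ((phi_adj _ x y).mpr ⟨hH, h, h.trans hH.reachable⟩)
    -- now use maximality of `𝒯'`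
    set 𝒟' := phi G (s(u, w)) ⁻¹' {T | T ∈ 𝒟 ∧ T ≠ ⊤} with h𝒟'def
    have h𝒟'prop : (∀ T ∈ 𝒟', IsTube (G.deleteEdges {s(u, w)}) T) ∧
        𝒟'.Pairwise fun S T => ¬ Overlapping S T := by
      constructor
      · intro T₀ hT₀
        exact phi_connected_iff.mp (h𝒟.1 _ hT₀.1)
      · intro S₀ hS₀ T₀ hT₀ hne hov
        exact h𝒟.2 hS₀.1 hT₀.1 (fun h => hne (phi_inj h)) (phi_overlapping_iff.mpr hov)
    have hsub' : 𝒯' ⊆ 𝒟' := by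
      intro T₀ hT₀
      exact ⟨hsub (heq ▸ Set.mem_insert_of_mem _ ⟨T₀, hT₀, rfl⟩), phi_ne_top he T₀⟩
    have hfinal : 𝒟' ⊆ 𝒯' := h𝒯'.2 h𝒟'prop hsub'
    have hU₀ : psi G (s(u, w)) U hUe ∈ 𝒟' := by
      rw [h𝒟'def, Set.mem_preimage, phi_psi]
      exact ⟨hU, hUtop⟩
    have := hfinal hU₀
    rw [heq]
    exact Set.mem_insert_of_mem _ ⟨_, this, phi_psi U hUe⟩

end Main

/-- for `G` connected with at least one edge, `𝒯` is a complete tubing of `G`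
iff it is the disjoint union of `{G}` and a complete tubing of `G∖e` for a unique edge `e`,
namely the unique edge of `G` outside every proper tube of `𝒯`. -/
theorem completeTubing_iff_deleteEdge {V : Type*} [Fintype V] (G : SimpleGraph V)
    (hconn : G.Connected) (hedge : G.edgeSet.Nonempty) (𝒯 : Set G.Subgraph) :
    IsCompleteTubing G 𝒯 ↔
      ∃! e : Sym2 V, e ∈ G.edgeSet ∧
        ∃ 𝒯' : Set (G.deleteEdges {e}).Subgraph,
          IsCompleteTubing (G.deleteEdges {e}) 𝒯' ∧
          (⊤ : G.Subgraph) ∉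
            (SimpleGraph.Subgraph.map (SimpleGraph.Hom.ofLE (G.deleteEdges_le {e}))) '' 𝒯' ∧
          𝒯 = insert ⊤
            ((SimpleGraph.Subgraph.map (SimpleGraph.Hom.ofLE (G.deleteEdges_le {e}))) '' 𝒯') ∧
          ∀ T ∈ 𝒯, T ≠ ⊤ → e ∉ T.edgeSet := by
  constructor
  · intro h𝒯
    obtain ⟨e, he, hunc⟩ := exists_uncovered h𝒯 hconn hedge
    obtain ⟨𝒯', hT', htop, heq⟩ := forward_data h𝒯 hconn he hunc
    refine ⟨e, ⟨he, 𝒯', hT', htop, heq, hunc⟩, ?_⟩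
    rintro e' ⟨he', 𝒯'', -, -, -, hunc'⟩
    exact unique_uncovered he hT' heq he' hunc'
  · rintro ⟨e, ⟨he, 𝒯', hT', -, heq, -⟩, -⟩
    exact backward hconn he hT' heq

end Cosmo
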